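/- arXiv:1706.02524 — 2 statements merged into one kernel-verified Lean document; each statement's English description precedes it below -/
import Mathlib

section
/- Let K and K̂ be N×N symmetric PSD matrices with K - K̂ PSD, and σ² > 0. Let λ_i and λ̂_i be the descending eigenvalues of K + σ²I and K̂ + σ²I respectively. If λ̂_N ≥ 2σ², then ½ Σᵢ (log λᵢ - log λ̂ᵢ) ≤ (1/(2σ²)) Σᵢ (λᵢ - λ̂ᵢ) - ½ Σᵢ (log λᵢ - log λ̂ᵢ). In other words, the slack of the Nyström upper bound on -½ log det(K+σ²I) is at most the slack of the variational lower bound -½ log det(K̂+σ²I) - (1/(2σ²))Tr(K - K̂). -/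
open Matrix

lemma trace_eq_sum_eigs {N : Type*} [Fintype N] [DecidableEq N]
    {A : Matrix N N ℝ} (hA : A.IsHermitian) :
    A.trace = ∑ i, hA.eigenvalues i := by
  conv_lhs => rw [hA.spectral_theorem, Unitary.conjStarAlgAut_apply]
  rw [trace_mul_cycle]
  rw [(mem_unitaryGroup_iff'.mp (hA.eigenvectorUnitary).2 : _)]
  simp [Matrix.trace_diagonal]

lemma psd_diag_nonneg {N : Type*} [Fintype N] [DecidableEq N]
    {P : Matrix N N ℝ} (hP : P.PosSemidef) (i : N) : 0 ≤ P i i := by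
  exact hP.diag_nonneg

lemma eig_ge_one {N : Type*} [Fintype N] [DecidableEq N]
    {C : Matrix N N ℝ} (hC : C.IsHermitian) (h : (C - 1).PosSemidef) (i : N) :
    1 ≤ hC.eigenvalues i := by
  have hv1 : star (⇑(hC.eigenvectorBasis i)) ⬝ᵥ ⇑(hC.eigenvectorBasis i) = 1 := by
    have horm := hC.eigenvectorBasis.orthonormal.1 i
    have := @inner_self_eq_norm_sq_to_K ℝ _ _ _ _ (hC.eigenvectorBasis i)
    rw [horm] at this
    rw [dotProduct_comm, ← EuclideanSpace.inner_eq_star_dotProduct]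
    simpa using this
  have key := (posSemidef_iff_dotProduct_mulVec.mp h).2 (⇑(hC.eigenvectorBasis i))
  rw [Matrix.sub_mulVec, Matrix.one_mulVec, hC.mulVec_eigenvectorBasis,
    dotProduct_sub, dotProduct_smul, hv1] at key
  simpa using key

lemma key_ineq {N : Type*} [Fintype N] [DecidableEq N] (A B : Matrix N N ℝ)
    (hA : A.PosDef) (hB : B.PosDef) (hAB : (A - B).PosSemidef)
    (c : ℝ) (hc : 0 < c) (hBc : ∀ i, c ≤ hB.1.eigenvalues i) :
    Real.log A.det - Real.log B.det ≤ (A.trace - B.trace) / c := by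
  classical
  set d : N → ℝ := hB.1.eigenvalues with hd
  have hdpos : ∀ i, 0 < d i := hB.eigenvalues_pos
  set V : Matrix N N ℝ := (hB.1.eigenvectorUnitary : Matrix N N ℝ) with hV
  have hVU : V * star V = 1 := mem_unitaryGroup_iff.mp (hB.1.eigenvectorUnitary).2
  have hUV : star V * V = 1 := mem_unitaryGroup_iff'.mp (hB.1.eigenvectorUnitary).2
  have hdiagB : star V * B * V = diagonal d := by
    have := hB.1.conjStarAlgAut_star_eigenvectorUnitary
    simpa [Unitary.conjStarAlgAut_star_apply] using this
  set s : N → ℝ := fun i => (Real.sqrt (d i))⁻¹ with hs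
  have hssd : ∀ i, s i * s i = (d i)⁻¹ := by
    intro i
    rw [hs, ← mul_inv, Real.mul_self_sqrt (hdpos i).le]
  have hsd : ∀ i, s i * d i * s i = 1 := by
    intro i
    have h1 : s i * d i * s i = d i * (s i * s i) := by ring
    rw [h1, hssd, mul_inv_cancel₀ (hdpos i).ne']
  set M : Matrix N N ℝ := star V * A * V with hM
  set C : Matrix N N ℝ := diagonal s * M * diagonal s with hC
  have hdss : diagonal s * diagonal d * diagonal s = 1 := by
    rw [diagonal_mul_diagonal, diagonal_mul_diagonal, ← Matrix.diagonal_one]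
    exact congrArg Matrix.diagonal (funext hsd)
  have hstar_s : (diagonal s)ᴴ = diagonal s := by
    rw [diagonal_conjTranspose]
    congr
  have hCsub : C - 1 = (diagonal s)ᴴ * (star V * (A - B) * V) * diagonal s := by
    rw [hstar_s, Matrix.mul_sub, Matrix.sub_mul, hdiagB, Matrix.mul_sub, Matrix.sub_mul,
      hdss, hC, hM]
  have hC1 : (C - 1).PosSemidef := by
    rw [hCsub]
    have h1 : (Vᴴ * (A - B) * V).PosSemidef := hAB.conjTranspose_mul_mul_same V
    rw [Matrix.star_eq_conjTranspose]
    exact h1.conjTranspose_mul_mul_same (diagonal s)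
  have hCH : C.IsHermitian := by
    have := hC1.1.add (Matrix.isHermitian_one)
    simpa using this
  set μ : N → ℝ := hCH.eigenvalues with hμ
  have hμ1 : ∀ i, 1 ≤ μ i := eig_ge_one hCH hC1
  -- determinant identities
  have hdetB : B.det = ∏ i, d i := by
    have := hB.1.det_eq_prod_eigenvalues
    simpa using this
  have hdetM : M.det = A.det := by
    have h1 : (star V).det * V.det = 1 := by
      rw [← Matrix.det_mul, hUV, Matrix.det_one]
    simp only [hM, Matrix.det_mul]
    calc (star V).det * A.det * V.det = A.det * ((star V).det * V.det) := by ring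
      _ = A.det := by rw [h1, mul_one]
  have hdetC : C.det * B.det = A.det := by
    simp only [hC, Matrix.det_mul, Matrix.det_diagonal, hdetM, hdetB]
    rw [show (∏ i, s i) * A.det * (∏ i, s i) * (∏ i, d i)
        = A.det * ∏ i, (s i * d i * s i) by
      rw [Finset.prod_mul_distrib, Finset.prod_mul_distrib]; ring]
    simp [hsd]
  have hdetCμ : C.det = ∏ i, μ i := by
    have := hCH.det_eq_prod_eigenvalues
    simpa using this
  have hdetBpos : 0 < B.det := hB.det_pos
  have hdetApos : 0 < A.det := hA.det_pos
  have hμpos : ∀ i, 0 < μ i := fun i => lt_of_lt_of_le one_pos (hμ1 i)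
  have hlogC : Real.log A.det - Real.log B.det = ∑ i, Real.log (μ i) := by
    rw [← Real.log_prod (fun i _ => (hμpos i).ne'), ← hdetCμ]
    rw [show A.det = C.det * B.det from hdetC.symm, Real.log_mul _ hdetBpos.ne']
    · ring
    · intro h
      rw [h, zero_mul] at hdetC
      exact hdetApos.ne' hdetC.symm
  -- trace identities
  have htraceM : M.trace = A.trace := by
    rw [hM, trace_mul_cycle, hVU, one_mul]
  have htraceB : B.trace = ∑ i, d i := trace_eq_sum_eigs hB.1
  have htraceC : C.trace = ∑ i, s i * M i i * s i := by
    simp [hC, Matrix.trace, Matrix.diag, Matrix.diagonal_mul, Matrix.mul_diagonal]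
  have htraceCμ : C.trace = ∑ i, μ i := trace_eq_sum_eigs hCH
  have hMdiag : ∀ i, d i ≤ M i i := by
    intro i
    have hpsd : (star V * (A - B) * V).PosSemidef := by
      rw [Matrix.star_eq_conjTranspose]
      exact hAB.conjTranspose_mul_mul_same V
    have h0 : 0 ≤ (star V * (A - B) * V) i i := psd_diag_nonneg hpsd i
    have heq : star V * (A - B) * V = M - diagonal d := by
      rw [Matrix.mul_sub, Matrix.sub_mul, hdiagB, hM]
    rw [heq] at h0
    simpa [Matrix.sub_apply, Matrix.diagonal_apply_eq] using h0
  -- chain of inequalities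
  have step1 : ∑ i, Real.log (μ i) ≤ ∑ i, (μ i - 1) :=
    Finset.sum_le_sum fun i _ => Real.log_le_sub_one_of_pos (hμpos i)
  have step2 : ∑ i, (μ i - 1) = ∑ i, (s i * M i i * s i - 1) := by
    rw [Finset.sum_sub_distrib, Finset.sum_sub_distrib, ← htraceCμ, htraceC]
  have step3 : ∀ i, s i * M i i * s i - 1 = (M i i - d i) / d i := by
    intro i
    have h1 : s i * M i i * s i = M i i * (d i)⁻¹ := by
      rw [mul_comm (s i) (M i i), mul_assoc, hssd]
    rw [h1]
    have hd0 : d i ≠ 0 := (hdpos i).ne'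
    field_simp
  have step4 : ∀ i, (M i i - d i) / d i ≤ (M i i - d i) / c := by
    intro i
    exact div_le_div_of_nonneg_left (by linarith [hMdiag i]) hc (hBc i)
  have step5 : ∑ i, (M i i - d i) / c = (A.trace - B.trace) / c := by
    rw [← Finset.sum_div, Finset.sum_sub_distrib, htraceB]
    congr 2
  calc Real.log A.det - Real.log B.det = ∑ i, Real.log (μ i) := hlogC
    _ ≤ ∑ i, (μ i - 1) := step1
    _ = ∑ i, (s i * M i i * s i - 1) := step2
    _ = ∑ i, (M i i - d i) / d i := by
        exact Finset.sum_congr rfl fun i _ => step3 i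
    _ ≤ ∑ i, (M i i - d i) / c := Finset.sum_le_sum fun i _ => step4 i
    _ = (A.trace - B.trace) / c := step5

theorem prop1_nld_slack {n : ℕ} (K Khat : Matrix (Fin (n + 1)) (Fin (n + 1)) ℝ)
    (hK : K.PosSemidef) (hKhat : Khat.PosSemidef) (hdiff : (K - Khat).PosSemidef)
    (σ : ℝ) (hσ : 0 < σ ^ 2)
    (hH : (K + σ ^ 2 • 1).IsHermitian) (hH' : (Khat + σ ^ 2 • 1).IsHermitian)
    (lam lamhat : Fin (n + 1) → ℝ)
    (hlam_desc : Antitone lam) (hlamhat_desc : Antitone lamhat)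
    (hlam : ∃ e : Fin (n + 1) ≃ Fin (n + 1), lam = hH.eigenvalues ∘ e)
    (hlamhat : ∃ e : Fin (n + 1) ≃ Fin (n + 1), lamhat = hH'.eigenvalues ∘ e)
    (hmin : 2 * σ ^ 2 ≤ lamhat (Fin.last n)) :
    (1 / 2) * ∑ i, (Real.log (lam i) - Real.log (lamhat i)) ≤
      (1 / (2 * σ ^ 2)) * ∑ i, (lam i - lamhat i) -
        (1 / 2) * ∑ i, (Real.log (lam i) - Real.log (lamhat i)) := by
  classical
  set A := K + σ ^ 2 • (1 : Matrix (Fin (n+1)) (Fin (n+1)) ℝ) with hAdef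
  set B := Khat + σ ^ 2 • (1 : Matrix (Fin (n+1)) (Fin (n+1)) ℝ) with hBdef
  have hquad : ∀ x : Fin (n+1) → ℝ, x ≠ 0 →
      0 < star x ⬝ᵥ ((σ ^ 2 • (1 : Matrix (Fin (n+1)) (Fin (n+1)) ℝ)) *ᵥ x) := by
    intro x hx
    rw [Matrix.smul_mulVec, Matrix.one_mulVec, dotProduct_smul]
    exact mul_pos hσ (Matrix.dotProduct_star_self_pos_iff.mpr hx)
  have hA : A.PosDef := by
    refine posDef_iff_dotProduct_mulVec.mpr ⟨hH, fun x hx => ?_⟩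
    rw [Matrix.add_mulVec, dotProduct_add]
    exact add_pos_of_nonneg_of_pos (hK.dotProduct_mulVec_nonneg x) (hquad x hx)
  have hB : B.PosDef := by
    refine posDef_iff_dotProduct_mulVec.mpr ⟨hH', fun x hx => ?_⟩
    rw [Matrix.add_mulVec, dotProduct_add]
    exact add_pos_of_nonneg_of_pos (hKhat.dotProduct_mulVec_nonneg x) (hquad x hx)
  have hAB : (A - B).PosSemidef := by
    have : A - B = K - Khat := by rw [hAdef, hBdef]; abel
    rw [this]; exact hdiff
  obtain ⟨e, he⟩ := hlam
  obtain ⟨e', he'⟩ := hlamhat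
  have hlamhat_ge : ∀ i, 2 * σ ^ 2 ≤ lamhat i := fun i =>
    le_trans hmin (hlamhat_desc (Fin.le_last i))
  have hBc : ∀ i, 2 * σ ^ 2 ≤ hB.1.eigenvalues i := by
    intro i
    have h1 : hB.1.eigenvalues = hH'.eigenvalues := rfl
    have h2 : hH'.eigenvalues i = lamhat (e'.symm i) := by
      rw [he']; simp
    rw [h1, h2]
    exact hlamhat_ge _
  have hc2 : 0 < 2 * σ ^ 2 := by linarith
  have key := key_ineq A B hA hB hAB (2 * σ ^ 2) hc2 hBc
  -- translate sums
  have hlampos : ∀ i, 0 < lam i := by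
    intro i
    rw [he]
    have : hH.eigenvalues = hA.1.eigenvalues := rfl
    rw [Function.comp_apply, this]
    exact hA.eigenvalues_pos _
  have hlamhatpos : ∀ i, 0 < lamhat i := fun i => lt_of_lt_of_le hc2 (hlamhat_ge i)
  have hdetA : A.det = ∏ i, lam i := by
    have h := hA.1.det_eq_prod_eigenvalues
    rw [he]
    have : ∏ i, (hH.eigenvalues ∘ e) i = ∏ i, hH.eigenvalues i :=
      Equiv.prod_comp e hH.eigenvalues
    rw [this]
    simpa using h
  have hdetB : B.det = ∏ i, lamhat i := by
    have h := hB.1.det_eq_prod_eigenvalues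
    rw [he']
    have : ∏ i, (hH'.eigenvalues ∘ e') i = ∏ i, hH'.eigenvalues i :=
      Equiv.prod_comp e' hH'.eigenvalues
    rw [this]
    simpa using h
  have hlogA : Real.log A.det = ∑ i, Real.log (lam i) := by
    rw [hdetA, Real.log_prod (fun i _ => (hlampos i).ne')]
  have hlogB : Real.log B.det = ∑ i, Real.log (lamhat i) := by
    rw [hdetB, Real.log_prod (fun i _ => (hlamhatpos i).ne')]
  have htrA : A.trace = ∑ i, lam i := by
    rw [trace_eq_sum_eigs hA.1, he]
    exact (Equiv.sum_comp e hH.eigenvalues).symm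
  have htrB : B.trace = ∑ i, lamhat i := by
    rw [trace_eq_sum_eigs hB.1, he']
    exact (Equiv.sum_comp e' hH'.eigenvalues).symm
  rw [hlogA, hlogB, htrA, htrB] at key
  rw [Finset.sum_sub_distrib, Finset.sum_sub_distrib]
  set S := (∑ i, Real.log (lam i)) - ∑ i, Real.log (lamhat i) with hS
  set T := (∑ i, lam i) - ∑ i, lamhat i with hT
  have h2 : (1 / (2 * σ ^ 2)) * T = T / (2 * σ ^ 2) := by ring
  linarith [key]
end

section
/- For symmetric matrices K ⪰ K̂ ⪰ 0 and σ² > 0 and any y ∈ ℝ^N, -½ yᵀ(K̂ + σ²I)⁻¹ y ≤ -½ yᵀ(K + σ²I)⁻¹ y ≤ -½ yᵀ(K + (σ² + Tr(K - K̂))I)⁻¹ y. -/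
open Matrix

lemma symm_dot {N : ℕ} {A : Matrix (Fin N) (Fin N) ℝ} (hA : A.IsHermitian)
    (u v : Fin N → ℝ) : u ⬝ᵥ A.mulVec v = v ⬝ᵥ A.mulVec u := by
  have hT : Aᵀ = A := by
    have := hA.eq
    simpa [Matrix.conjTranspose_eq_transpose_of_trivial] using this
  rw [dotProduct_mulVec, dotProduct_comm]
  conv_lhs => rw [← hT]
  rw [vecMul_transpose]

lemma quad_le_inv {N : ℕ} {A : Matrix (Fin N) (Fin N) ℝ} (hA : A.PosDef)
    (x y : Fin N → ℝ) :
    2 * (x ⬝ᵥ y) - x ⬝ᵥ A.mulVec x ≤ y ⬝ᵥ A⁻¹.mulVec y := by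
  set w : Fin N → ℝ := A⁻¹.mulVec y with hw
  have hAw : A.mulVec w = y := by
    rw [hw, mulVec_mulVec, Matrix.mul_nonsing_inv _ hA.det_pos.ne'.isUnit, one_mulVec]
  have hz := hA.posSemidef.dotProduct_mulVec_nonneg (x - w)
  have hexp : star (x - w) ⬝ᵥ A.mulVec (x - w)
      = x ⬝ᵥ A.mulVec x - 2 * (x ⬝ᵥ A.mulVec w) + w ⬝ᵥ A.mulVec w := by
    have hsym := symm_dot hA.isHermitian w x
    simp only [star_trivial, sub_dotProduct, mulVec_sub, dotProduct_sub]
    ring_nf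
    rw [hsym]
    ring
  have hyy : y ⬝ᵥ A⁻¹.mulVec y = w ⬝ᵥ A.mulVec w := by
    rw [← hw, ← hAw, symm_dot hA.isHermitian, hAw, dotProduct_comm]
  have hxy : x ⬝ᵥ y = x ⬝ᵥ A.mulVec w := by rw [hAw]
  rw [hexp] at hz
  rw [hyy, hxy]
  linarith

lemma inv_quad_anti {N : ℕ} {A B : Matrix (Fin N) (Fin N) ℝ} (hA : A.PosDef)
    (hB : B.PosDef) (h : (B - A).PosSemidef) (y : Fin N → ℝ) :
    y ⬝ᵥ B⁻¹.mulVec y ≤ y ⬝ᵥ A⁻¹.mulVec y := by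
  set x : Fin N → ℝ := B⁻¹.mulVec y with hx
  have hBx : B.mulVec x = y := by
    rw [hx, mulVec_mulVec, Matrix.mul_nonsing_inv _ hB.det_pos.ne'.isUnit, one_mulVec]
  have hBinv : y ⬝ᵥ B⁻¹.mulVec y = x ⬝ᵥ B.mulVec x := by
    rw [← hx, ← hBx, symm_dot hB.isHermitian, hBx, dotProduct_comm]
  have hdiff := h.dotProduct_mulVec_nonneg x
  simp only [star_trivial, sub_mulVec, dotProduct_sub] at hdiff
  have key := quad_le_inv hA x y
  have hxy : x ⬝ᵥ y = x ⬝ᵥ B.mulVec x := by rw [← hBx]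
  rw [hxy] at key
  linarith [hBinv ▸ le_refl (y ⬝ᵥ B⁻¹.mulVec y)]

lemma psd_trace_nonneg {N : ℕ} {M : Matrix (Fin N) (Fin N) ℝ} (hM : M.PosSemidef) :
    0 ≤ M.trace := by
  rw [Matrix.trace]
  apply Finset.sum_nonneg
  intro i _
  have := hM.dotProduct_mulVec_nonneg (Pi.single i 1)
  simpa [Matrix.mulVec_single, dotProduct, Pi.single_apply] using this

lemma smul_one_posdef {N : ℕ} {c : ℝ} (hc : 0 < c) :
    (c • (1 : Matrix (Fin N) (Fin N) ℝ)).PosDef := by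
  rw [smul_one_eq_diagonal]
  exact Matrix.PosDef.diagonal (fun _ => hc)

lemma smul_one_psd {N : ℕ} {c : ℝ} (hc : 0 ≤ c) :
    (c • (1 : Matrix (Fin N) (Fin N) ℝ)).PosSemidef := by
  rw [smul_one_eq_diagonal]
  exact Matrix.PosSemidef.diagonal (fun _ => hc)

theorem nip_sandwich {N : ℕ} (K Khat : Matrix (Fin N) (Fin N) ℝ)
    (hKhat : Khat.PosSemidef) (hdiff : (K - Khat).PosSemidef)
    (σ : ℝ) (hσ : 0 < σ ^ 2) (y : Fin N → ℝ) :
    -(1 / 2) * (y ⬝ᵥ (Khat + σ ^ 2 • 1)⁻¹.mulVec y) ≤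
      -(1 / 2) * (y ⬝ᵥ (K + σ ^ 2 • 1)⁻¹.mulVec y) ∧
    -(1 / 2) * (y ⬝ᵥ (K + σ ^ 2 • 1)⁻¹.mulVec y) ≤
      -(1 / 2) * (y ⬝ᵥ (K + (σ ^ 2 + (K - Khat).trace) • 1)⁻¹.mulVec y) := by
  have hK : K.PosSemidef := by
    have := hdiff.add hKhat
    simpa using this
  have htr : 0 ≤ (K - Khat).trace := psd_trace_nonneg hdiff
  have h1 : (Khat + σ ^ 2 • 1 : Matrix (Fin N) (Fin N) ℝ).PosDef :=
    Matrix.PosDef.posSemidef_add hKhat (smul_one_posdef hσ)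
  have h2 : (K + σ ^ 2 • 1 : Matrix (Fin N) (Fin N) ℝ).PosDef :=
    Matrix.PosDef.posSemidef_add hK (smul_one_posdef hσ)
  have h3 : (K + (σ ^ 2 + (K - Khat).trace) • 1 : Matrix (Fin N) (Fin N) ℝ).PosDef :=
    Matrix.PosDef.posSemidef_add hK (smul_one_posdef (by linarith))
  constructor
  · have hd : ((K + σ ^ 2 • 1) - (Khat + σ ^ 2 • 1) : Matrix (Fin N) (Fin N) ℝ)
        = K - Khat := by abel
    have := inv_quad_anti h1 h2 (hd ▸ hdiff) y
    nlinarith [this]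
  · have hd : ((K + (σ ^ 2 + (K - Khat).trace) • 1) - (K + σ ^ 2 • 1)
        : Matrix (Fin N) (Fin N) ℝ) = (K - Khat).trace • 1 := by
      rw [add_smul]; abel
    have := inv_quad_anti h2 h3 (hd ▸ smul_one_psd htr) y
    nlinarith [this]
end
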